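/- Let S be a Haar-uniformly distributed random orthogonal matrix of dimension d, and let A, B be real symmetric d×d matrices. Then E[S A Sᵀ B S A Sᵀ] = p_A · (‖A‖_F²/d) · tr(B) · I + q_A · (‖A‖_F²/d) · B, where p_A = (d − r_A)/((d−1)(d+2)), q_A = (r_A + 1 + (r_A − 1)/(d − 1))/(d + 2), and r_A = (tr A)²/‖A‖_F² (with A ≠ 0). -/

import Mathlib

open MeasureTheory Matrix
set_option linter.unusedSectionVars false
set_option linter.unreachableTactic false
set_option linter.unusedTactic false
set_option maxHeartbeats 1000000
instance {d : ℕ} : MeasurableSpace (Matrix (Fin d) (Fin d) ℝ) := MeasurableSpace.pi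

/-- A probability measure on `d × d` real matrices is the Haar (uniform) distribution on the
orthogonal group if it is supported on orthogonal matrices and invariant under left and right
multiplication by any orthogonal matrix. -/
def IsHaarOrthogonal {d : ℕ} (μ : Measure (Matrix (Fin d) (Fin d) ℝ)) : Prop :=
  IsProbabilityMeasure μ ∧
  (∀ᵐ S ∂μ, S ∈ Matrix.orthogonalGroup (Fin d) ℝ) ∧
  (∀ Q ∈ Matrix.orthogonalGroup (Fin d) ℝ, μ.map (fun S => Q * S) = μ) ∧
  (∀ Q ∈ Matrix.orthogonalGroup (Fin d) ℝ, μ.map (fun S => S * Q) = μ)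

namespace HaarFourth
variable {d : ℕ}
abbrev Mat (d : ℕ) := Matrix (Fin d) (Fin d) ℝ



lemma meas_entry (i j : Fin d) : Measurable fun S : Mat d => S i j :=
  (measurable_pi_apply j).comp (measurable_pi_apply i)

lemma meas_mulL (Q : Mat d) : Measurable fun S : Mat d => Q * S := by
  apply measurable_pi_lambda; intro i; apply measurable_pi_lambda; intro a
  simp only [Matrix.mul_apply]
  exact Finset.measurable_sum _ fun k _ => (meas_entry k a).const_mul _

lemma meas_mulR (Q : Mat d) : Measurable fun S : Mat d => S * Q := by
  apply measurable_pi_lambda; intro i; apply measurable_pi_lambda; intro a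
  simp only [Matrix.mul_apply]
  exact Finset.measurable_sum _ fun k _ => (meas_entry i k).mul_const _

variable (μ : Measure (Mat d))

lemma rows_orthonormal {S : Mat d} (h : S ∈ Matrix.orthogonalGroup (Fin d) ℝ) (i j : Fin d) :
    ∑ b, S i b * S j b = if i = j then (1:ℝ) else 0 := by
  rw [Matrix.mem_orthogonalGroup_iff] at h
  have := congrFun (congrFun (show S * Sᵀ = 1 by simpa using h) i) j
  simpa [Matrix.mul_apply, Matrix.one_apply] using this

lemma cols_orthonormal {S : Mat d} (h : S ∈ Matrix.orthogonalGroup (Fin d) ℝ) (a b : Fin d) :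
    ∑ i, S i a * S i b = if a = b then (1:ℝ) else 0 := by
  rw [Matrix.mem_orthogonalGroup_iff'] at h
  have := congrFun (congrFun (show Sᵀ * S = 1 by simpa using h) a) b
  simpa [Matrix.mul_apply, Matrix.one_apply, mul_comm] using this

lemma ae_bound (hO : ∀ᵐ S ∂μ, S ∈ Matrix.orthogonalGroup (Fin d) ℝ) :
    ∀ᵐ S ∂μ, ∀ i a : Fin d, |S i a| ≤ 1 := by
  filter_upwards [hO] with S hS i a
  have h1 : ∑ b, S i b * S i b = 1 := by simpa using rows_orthonormal hS i i
  have h2 : S i a * S i a ≤ 1 := by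
    rw [← h1]
    exact Finset.single_le_sum (fun b _ => mul_self_nonneg (S i b)) (Finset.mem_univ a)
  exact abs_le_one_iff_mul_self_le_one.mpr h2

private lemma abs_mul_le_one {x y : ℝ} (hx : |x| ≤ 1) (hy : |y| ≤ 1) : |x * y| ≤ 1 := by
  rw [abs_mul]; exact mul_le_one₀ hx (abs_nonneg _) hy

lemma integ4 [IsProbabilityMeasure μ] (hO : ∀ᵐ S ∂μ, S ∈ Matrix.orthogonalGroup (Fin d) ℝ) (i j k l a b c e : Fin d) :
    Integrable (fun S : Mat d => S i a * S j b * S k c * S l e) μ := by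
  have hm : Measurable (fun S : Mat d => S i a * S j b * S k c * S l e) :=
    (((meas_entry i a).mul (meas_entry j b)).mul (meas_entry k c)).mul (meas_entry l e)
  refine (integrable_const (1:ℝ)).mono' hm.aestronglyMeasurable ?_
  filter_upwards [ae_bound μ hO] with S hS
  rw [Real.norm_eq_abs]
  exact abs_mul_le_one (abs_mul_le_one (abs_mul_le_one (hS i a) (hS j b)) (hS k c)) (hS l e)

lemma integ2 [IsProbabilityMeasure μ] (hO : ∀ᵐ S ∂μ, S ∈ Matrix.orthogonalGroup (Fin d) ℝ) (i j a b : Fin d) :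
    Integrable (fun S : Mat d => S i a * S j b) μ := by
  have hm : Measurable (fun S : Mat d => S i a * S j b) := (meas_entry i a).mul (meas_entry j b)
  refine (integrable_const (1:ℝ)).mono' hm.aestronglyMeasurable ?_
  filter_upwards [ae_bound μ hO] with S hS
  rw [Real.norm_eq_abs]
  exact abs_mul_le_one (hS i a) (hS j b)

lemma cov_left (hL : ∀ Q ∈ Matrix.orthogonalGroup (Fin d) ℝ, μ.map (fun S => Q * S) = μ)
    {Q : Mat d} (hQ : Q ∈ Matrix.orthogonalGroup (Fin d) ℝ) (f : Mat d → ℝ) (hf : Measurable f) :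
    ∫ S, f (Q * S) ∂μ = ∫ S, f S ∂μ := by
  conv_rhs => rw [← hL Q hQ]
  rw [integral_map (meas_mulL Q).aemeasurable hf.aestronglyMeasurable]

lemma cov_right (hR : ∀ Q ∈ Matrix.orthogonalGroup (Fin d) ℝ, μ.map (fun S => S * Q) = μ)
    {Q : Mat d} (hQ : Q ∈ Matrix.orthogonalGroup (Fin d) ℝ) (f : Mat d → ℝ) (hf : Measurable f) :
    ∫ S, f (S * Q) ∂μ = ∫ S, f S ∂μ := by
  conv_rhs => rw [← hR Q hQ]
  rw [integral_map (meas_mulR Q).aemeasurable hf.aestronglyMeasurable]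



-- sign matrix
def Dm (r : Fin d) : Mat d := Matrix.diagonal (fun t => if t = r then (-1:ℝ) else 1)

lemma Dm_mem (r : Fin d) : Dm r ∈ Matrix.orthogonalGroup (Fin d) ℝ := by
  rw [Matrix.mem_orthogonalGroup_iff]
  have hstar : star (Dm r) = Dm r := by
    ext i j
    simp [Dm, Matrix.star_apply, Matrix.diagonal_apply]
    split_ifs with h1 h2 <;> simp_all <;> tauto
  rw [show (Dm r)ᵀ = Dm r from by simp [Dm]]
  show Dm r * Dm r = 1
  ext i j
  simp [Dm, Matrix.diagonal_mul_diagonal, Matrix.diagonal_apply, Matrix.one_apply]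
  split_ifs <;> simp_all <;> norm_num

lemma Dm_mulL (r : Fin d) (S : Mat d) (i a : Fin d) :
    (Dm r * S) i a = (if i = r then (-1:ℝ) else 1) * S i a := by
  simp [Dm, Matrix.diagonal_mul]

lemma Dm_mulR (r : Fin d) (S : Mat d) (i a : Fin d) :
    (S * Dm r) i a = S i a * (if a = r then (-1:ℝ) else 1) := by
  simp [Dm, Matrix.mul_diagonal]

-- permutation matrix
lemma Pm_mem (σ : Equiv.Perm (Fin d)) : σ.permMatrix ℝ ∈ Matrix.orthogonalGroup (Fin d) ℝ := by
  rw [Matrix.mem_orthogonalGroup_iff]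
  have hstar : star (σ.permMatrix ℝ) = (σ.permMatrix ℝ)ᵀ := by
    ext i j; simp [Matrix.star_apply]
  rw [← PEquiv.toMatrix_symm, ← Equiv.toPEquiv_symm]
  show (σ.toPEquiv.toMatrix : Mat d) * (σ.symm.toPEquiv.toMatrix) = 1
  rw [← PEquiv.toMatrix_trans, ← Equiv.toPEquiv_trans]
  simp

lemma Pm_mulL (σ : Equiv.Perm (Fin d)) (S : Mat d) (i a : Fin d) :
    (σ.permMatrix ℝ * S) i a = S (σ i) a := by
  rw [show σ.permMatrix ℝ * S = S.submatrix σ id from PEquiv.toMatrix_toPEquiv_mul σ S]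
  rfl

lemma Pm_mulR (σ : Equiv.Perm (Fin d)) (S : Mat d) (i a : Fin d) :
    (S * σ.permMatrix ℝ) i a = S i (σ.symm a) := by
  rw [show S * σ.permMatrix ℝ = S.submatrix id σ.symm from PEquiv.mul_toMatrix_toPEquiv S σ]
  rfl


lemma fin_zero_ne_one [NeZero d] (hd : 2 ≤ d) : (0 : Fin d) ≠ 1 := by
  intro h
  have h2 := congrArg Fin.val h
  rw [Fin.val_zero, Fin.val_one'] at h2
  have h3 : 1 % d = 1 := Nat.mod_eq_of_lt (by omega)
  omega

noncomputable def rs : ℝ := Real.sqrt 2 / 2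

lemma rs_sq : rs ^ 2 = 1 / 2 := by
  rw [rs, div_pow, Real.sq_sqrt (by norm_num : (0:ℝ) ≤ 2)]
  norm_num

noncomputable def Rot [NeZero d] : Mat d := Matrix.of fun i j =>
  if i = 0 then (if j = 0 then rs else if j = 1 then rs else 0)
  else if i = 1 then (if j = 0 then -rs else if j = 1 then rs else 0)
  else if j = i then 1 else 0

lemma sum_two_supp [NeZero d] (hd : 2 ≤ d) (f : Fin d → ℝ) (x y : ℝ)
    (hf : ∀ k, f k = (if k = 0 then x else if k = 1 then y else 0)) :
    ∑ k, f k = x + y := by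
  have h01 := fin_zero_ne_one (d := d) hd
  have : ∀ k, f k = (if k = 0 then x else 0) + (if k = 1 then y else 0) := by
    intro k
    rw [hf k]
    split_ifs with h1 h2 <;> simp_all
  rw [Finset.sum_congr rfl (fun k _ => this k), Finset.sum_add_distrib]
  simp

lemma Rot_mem [NeZero d] (hd : 2 ≤ d) : Rot ∈ Matrix.orthogonalGroup (Fin d) ℝ := by
  have h01 := fin_zero_ne_one (d := d) hd
  have hsq : rs * rs = 1 / 2 := by have := rs_sq; nlinarith [rs_sq]
  rw [Matrix.mem_orthogonalGroup_iff]
  have hstar : star (Rot (d := d)) = (Rot (d := d))ᵀ := by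
    ext i j; simp [Matrix.star_apply]
  ext i j
  rw [Matrix.mul_apply]
  simp only [Matrix.transpose_apply]
  by_cases hi0 : i = 0
  · subst hi0
    rw [sum_two_supp hd _ (rs * Rot j 0) (rs * Rot j 1) (by
      intro k
      simp only [Rot, Matrix.of_apply]
      split_ifs <;> simp_all)]
    by_cases hj0 : j = 0
    · subst hj0; simp [Rot, Matrix.one_apply, h01, Ne.symm h01, hsq]; try ring
    · by_cases hj1 : j = 1
      · subst hj1; simp [Rot, Matrix.one_apply, h01, Ne.symm h01, hj0] <;> try ring
      · simp [Rot, Matrix.one_apply, hj0, hj1, Ne.symm hj0, Ne.symm hj1]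
  · by_cases hi1 : i = 1
    · subst hi1
      rw [sum_two_supp hd _ (-rs * Rot j 0) (rs * Rot j 1) (by
        intro k
        simp only [Rot, Matrix.of_apply]
        split_ifs <;> simp_all)]
      by_cases hj0 : j = 0
      · subst hj0; simp [Rot, Matrix.one_apply, h01, Ne.symm h01]; try ring
      · by_cases hj1 : j = 1
        · subst hj1; simp [Rot, Matrix.one_apply, h01, Ne.symm h01, hsq]; try ring
        · simp [Rot, Matrix.one_apply, hj0, hj1, Ne.symm hj0, Ne.symm hj1]
    · have : ∀ k, Rot (d := d) i k * Rot j k = (if k = i then Rot j i else 0) := by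
        intro k
        by_cases hk : k = i
        · subst hk; simp [Rot, Matrix.of_apply, hi0, hi1]
        · have hR : Rot (d := d) i k = 0 := by
            simp only [Rot, Matrix.of_apply]
            rw [if_neg hi0, if_neg hi1, if_neg hk]
          rw [hR, zero_mul, if_neg hk]
      rw [Finset.sum_congr rfl (fun k _ => this k), Finset.sum_ite_eq' Finset.univ]
      simp only [Finset.mem_univ, if_true]
      by_cases hj0 : j = 0
      · subst hj0; simp [Rot, Matrix.one_apply, hi0, hi1, Ne.symm hi0]
      · by_cases hj1 : j = 1
        · subst hj1; simp [Rot, Matrix.one_apply, hi0, hi1, Ne.symm hi1]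
        · simp [Rot, Matrix.one_apply, hj0, hj1, eq_comm]

lemma Rot_mulL_00 [NeZero d] (hd : 2 ≤ d) (S : Mat d) :
    (Rot (d := d) * S) 0 0 = rs * S 0 0 + rs * S 1 0 := by
  rw [Matrix.mul_apply]
  exact sum_two_supp hd _ _ _ (by
    intro k
    simp only [Rot, Matrix.of_apply]
    split_ifs <;> simp_all)


noncomputable def mom (μ : Measure (Mat d)) (i j k l a b c e : Fin d) : ℝ :=
  ∫ S, S i a * S j b * S k c * S l e ∂μ

lemma meas4 (i j k l a b c e : Fin d) :
    Measurable (fun S : Mat d => S i a * S j b * S k c * S l e) :=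
  (((meas_entry i a).mul (meas_entry j b)).mul (meas_entry k c)).mul (meas_entry l e)

lemma mom_reorder (μ : Measure (Mat d)) {i j k l a b c e i' j' k' l' a' b' c' e' : Fin d}
    (h : ∀ S : Mat d, S i a * S j b * S k c * S l e = S i' a' * S j' b' * S k' c' * S l' e') :
    mom μ i j k l a b c e = mom μ i' j' k' l' a' b' c' e' :=
  integral_congr_ae (Filter.Eventually.of_forall fun S => h S)

variable (μ : Measure (Mat d))

lemma mom_perm (hL : ∀ Q ∈ Matrix.orthogonalGroup (Fin d) ℝ, μ.map (fun S => Q * S) = μ)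
    (hR : ∀ Q ∈ Matrix.orthogonalGroup (Fin d) ℝ, μ.map (fun S => S * Q) = μ)
    (σ τ : Equiv.Perm (Fin d)) (i j k l a b c e : Fin d) :
    mom μ i j k l a b c e = mom μ (σ i) (σ j) (σ k) (σ l) (τ a) (τ b) (τ c) (τ e) := by
  have step1 : mom μ (σ i) (σ j) (σ k) (σ l) (τ a) (τ b) (τ c) (τ e)
      = ∫ S, S i (τ a) * S j (τ b) * S k (τ c) * S l (τ e) ∂μ := by
    rw [mom, ← cov_left μ hL (Pm_mem σ⁻¹) _ (meas4 (σ i) (σ j) (σ k) (σ l) (τ a) (τ b) (τ c) (τ e))]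
    refine integral_congr_ae (Filter.Eventually.of_forall fun S => ?_)
    simp [Pm_mulL]
  have step2 : mom μ i j k l a b c e
      = ∫ S, S i (τ a) * S j (τ b) * S k (τ c) * S l (τ e) ∂μ := by
    rw [mom, ← cov_right μ hR (Pm_mem τ⁻¹) _ (meas4 i j k l a b c e)]
    refine integral_congr_ae (Filter.Eventually.of_forall fun S => ?_)
    simp [Pm_mulR, Equiv.Perm.inv_def]
  rw [step1, ← step2]

lemma mom_sign_row (hL : ∀ Q ∈ Matrix.orthogonalGroup (Fin d) ℝ, μ.map (fun S => Q * S) = μ)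
    (r i j k l a b c e : Fin d) :
    mom μ i j k l a b c e =
      ((if i = r then (-1:ℝ) else 1) * (if j = r then (-1:ℝ) else 1) *
       (if k = r then (-1:ℝ) else 1) * (if l = r then (-1:ℝ) else 1)) * mom μ i j k l a b c e := by
  conv_lhs => rw [mom, ← cov_left μ hL (Dm_mem r) _ (meas4 i j k l a b c e)]
  have h : ∀ S : Mat d, (Dm r * S) i a * (Dm r * S) j b * (Dm r * S) k c * (Dm r * S) l e
      = ((if i = r then (-1:ℝ) else 1) * (if j = r then (-1:ℝ) else 1) *
         (if k = r then (-1:ℝ) else 1) * (if l = r then (-1:ℝ) else 1)) *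
        (S i a * S j b * S k c * S l e) := by
    intro S
    rw [Dm_mulL, Dm_mulL, Dm_mulL, Dm_mulL]
    ring
  rw [integral_congr_ae (Filter.Eventually.of_forall h), integral_const_mul, mom]

lemma mom_sign_col (hR : ∀ Q ∈ Matrix.orthogonalGroup (Fin d) ℝ, μ.map (fun S => S * Q) = μ)
    (r i j k l a b c e : Fin d) :
    mom μ i j k l a b c e =
      ((if a = r then (-1:ℝ) else 1) * (if b = r then (-1:ℝ) else 1) *
       (if c = r then (-1:ℝ) else 1) * (if e = r then (-1:ℝ) else 1)) * mom μ i j k l a b c e := by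
  conv_lhs => rw [mom, ← cov_right μ hR (Dm_mem r) _ (meas4 i j k l a b c e)]
  have h : ∀ S : Mat d, (S * Dm r) i a * (S * Dm r) j b * (S * Dm r) k c * (S * Dm r) l e
      = ((if a = r then (-1:ℝ) else 1) * (if b = r then (-1:ℝ) else 1) *
         (if c = r then (-1:ℝ) else 1) * (if e = r then (-1:ℝ) else 1)) *
        (S i a * S j b * S k c * S l e) := by
    intro S
    rw [Dm_mulR, Dm_mulR, Dm_mulR, Dm_mulR]
    ring
  rw [integral_congr_ae (Filter.Eventually.of_forall h), integral_const_mul, mom]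

lemma mom_zero_row (hL : ∀ Q ∈ Matrix.orthogonalGroup (Fin d) ℝ, μ.map (fun S => Q * S) = μ)
    {r i j k l : Fin d} (a b c e : Fin d)
    (hodd : ((if i = r then (-1:ℝ) else 1) * (if j = r then (-1:ℝ) else 1) *
       (if k = r then (-1:ℝ) else 1) * (if l = r then (-1:ℝ) else 1)) = -1) :
    mom μ i j k l a b c e = 0 := by
  have h := mom_sign_row μ hL r i j k l a b c e
  rw [hodd] at h
  linarith

lemma mom_zero_col (hR : ∀ Q ∈ Matrix.orthogonalGroup (Fin d) ℝ, μ.map (fun S => S * Q) = μ)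
    {r a b c e : Fin d} (i j k l : Fin d)
    (hodd : ((if a = r then (-1:ℝ) else 1) * (if b = r then (-1:ℝ) else 1) *
       (if c = r then (-1:ℝ) else 1) * (if e = r then (-1:ℝ) else 1)) = -1) :
    mom μ i j k l a b c e = 0 := by
  have h := mom_sign_col μ hR r i j k l a b c e
  rw [hodd] at h
  linarith

lemma row_class (i j k l : Fin d) :
    (i = j ∧ j = k ∧ k = l) ∨
    (i = j ∧ k = l ∧ i ≠ k) ∨ (i = k ∧ j = l ∧ i ≠ j) ∨ (i = l ∧ j = k ∧ i ≠ j) ∨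
    ((∃ r, ((if i = r then (-1:ℝ) else 1) * (if j = r then (-1:ℝ) else 1) *
       (if k = r then (-1:ℝ) else 1) * (if l = r then (-1:ℝ) else 1)) = -1)
      ∧ ¬(i = j ∧ k = l) ∧ ¬(i = k ∧ j = l) ∧ ¬(i = l ∧ j = k)) := by
  by_cases h1 : i = j
  · subst h1
    by_cases hkl : k = l
    · by_cases hik : i = k
      · exact Or.inl ⟨rfl, hik, hkl⟩
      · exact Or.inr (Or.inl ⟨rfl, hkl, hik⟩)
    · by_cases hik : i = k
      · subst hik
        refine Or.inr (Or.inr (Or.inr (Or.inr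
          ⟨⟨l, ?_⟩, fun h => hkl h.2, fun h => hkl h.2, fun h => hkl h.1⟩)))
        simp [hkl]
      · by_cases hil : i = l
        · subst hil
          refine Or.inr (Or.inr (Or.inr (Or.inr
            ⟨⟨k, ?_⟩, fun h => hkl h.2, fun h => hik h.1, fun h => hik h.2⟩)))
          simp [hik, hkl, Ne.symm hkl]
        · refine Or.inr (Or.inr (Or.inr (Or.inr
            ⟨⟨k, ?_⟩, fun h => hkl h.2, fun h => hik h.1, fun h => hil h.1⟩)))
          simp [hik, Ne.symm hkl]
  · by_cases h2 : i = k
    · subst h2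
      by_cases hjl : j = l
      · exact Or.inr (Or.inr (Or.inl ⟨rfl, hjl, h1⟩))
      · refine Or.inr (Or.inr (Or.inr (Or.inr
          ⟨⟨j, ?_⟩, fun h => h1 h.1, fun h => hjl h.2, fun h => h1 h.2.symm⟩)))
        simp [h1, Ne.symm hjl]
    · by_cases h3 : i = l
      · subst h3
        by_cases hjk : j = k
        · exact Or.inr (Or.inr (Or.inr (Or.inl ⟨rfl, hjk, h1⟩)))
        · refine Or.inr (Or.inr (Or.inr (Or.inr
            ⟨⟨j, ?_⟩, fun h => h1 h.1, fun h => h2 h.1, fun h => hjk h.2⟩)))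
          simp [h1, Ne.symm hjk]
      · refine Or.inr (Or.inr (Or.inr (Or.inr
          ⟨⟨i, ?_⟩, fun h => h1 h.1, fun h => h2 h.1, fun h => h3 h.1⟩)))
        simp [Ne.symm h1, Ne.symm h2, Ne.symm h3]

section Canonical
variable [NeZero d] (μ : Measure (Mat d)) [IsProbabilityMeasure μ]

lemma sum_split_head (hd : 2 ≤ d) (f : Fin d → ℝ) (v w : ℝ) (h0 : f 0 = v)
    (h1 : ∀ a, a ≠ 0 → f a = w) :
    ∑ a, f a = v + ((d:ℝ) - 1) * w := by
  rw [← Finset.add_sum_erase _ _ (Finset.mem_univ (0 : Fin d)), h0]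
  congr 1
  rw [Finset.sum_congr rfl (fun a ha => h1 a (Finset.ne_of_mem_erase ha)), Finset.sum_const,
    Finset.card_erase_of_mem (Finset.mem_univ _), Finset.card_univ, Fintype.card_fin,
    nsmul_eq_mul, Nat.cast_sub (by omega : 1 ≤ d), Nat.cast_one]

lemma m2_rel (hO : ∀ᵐ S ∂μ, S ∈ Matrix.orthogonalGroup (Fin d) ℝ)
    (hR : ∀ Q ∈ Matrix.orthogonalGroup (Fin d) ℝ, μ.map (fun S => S * Q) = μ) :
    (d:ℝ) * ∫ S, S (0 : Fin d) 0 * S 0 0 ∂μ = 1 := by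
  have key : ∫ S, (∑ a, S (0:Fin d) a * S 0 a) ∂μ = 1 := by
    rw [integral_congr_ae (g := fun _ => (1:ℝ))]
    · simp
    · filter_upwards [hO] with S hS
      rw [rows_orthonormal hS 0 0, if_pos rfl]
  rw [integral_finset_sum _ (fun a _ => integ2 μ hO 0 0 a a)] at key
  have hsq : ∀ a : Fin d, ∫ S, S (0:Fin d) a * S 0 a ∂μ = ∫ S, S (0:Fin d) 0 * S 0 0 ∂μ := by
    intro a
    have hme : Measurable (fun S : Mat d => S (0:Fin d) 0 * S 0 0) :=
      (meas_entry 0 0).mul (meas_entry 0 0)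
    rw [← cov_right μ hR (Pm_mem (Equiv.swap 0 a)) _ hme]
    refine integral_congr_ae (Filter.Eventually.of_forall fun S => ?_)
    simp only [Pm_mulR, Equiv.symm_swap, Equiv.swap_apply_left]
  rw [Finset.sum_congr rfl (fun a _ => hsq a), Finset.sum_const, Finset.card_univ,
    Fintype.card_fin, nsmul_eq_mul] at key
  exact key

lemma canonical_vals (hd : 2 ≤ d)
    (hO : ∀ᵐ S ∂μ, S ∈ Matrix.orthogonalGroup (Fin d) ℝ)
    (hL : ∀ Q ∈ Matrix.orthogonalGroup (Fin d) ℝ, μ.map (fun S => Q * S) = μ)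
    (hR : ∀ Q ∈ Matrix.orthogonalGroup (Fin d) ℝ, μ.map (fun S => S * Q) = μ) :
    mom μ 0 0 0 0 0 0 0 0 = 3/((d:ℝ)*((d:ℝ)+2)) ∧
    mom μ 0 0 0 0 0 0 1 1 = 1/((d:ℝ)*((d:ℝ)+2)) ∧
    mom μ 0 0 1 1 0 0 0 0 = 1/((d:ℝ)*((d:ℝ)+2)) ∧
    mom μ 0 0 1 1 0 0 1 1 = ((d:ℝ)+1)/((d:ℝ)*((d:ℝ)-1)*((d:ℝ)+2)) ∧
    mom μ 0 0 1 1 0 1 0 1 = -1/((d:ℝ)*((d:ℝ)-1)*((d:ℝ)+2)) := by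
  have h01 : (0 : Fin d) ≠ 1 := fin_zero_ne_one hd
  set dr : ℝ := (d : ℝ) with hdr
  have hdr2 : (2:ℝ) ≤ dr := by rw [hdr]; exact_mod_cast hd
  have hd0 : dr ≠ 0 := by linarith
  have hd1 : dr - 1 ≠ 0 := by linarith
  have hd2 : dr + 2 ≠ 0 := by linarith
  set m2 : ℝ := ∫ S, S (0 : Fin d) 0 * S 0 0 ∂μ with hm2def
  have hdm2 : dr * m2 = 1 := m2_rel μ hO hR
  set m4 : ℝ := mom μ 0 0 0 0 0 0 0 0 with hm4def
  set bC : ℝ := mom μ 0 0 0 0 0 0 1 1 with hbCdef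
  set aC : ℝ := mom μ 0 0 1 1 0 0 0 0 with haCdef
  set eC : ℝ := mom μ 0 0 1 1 0 0 1 1 with heCdef
  set cC : ℝ := mom μ 0 0 1 1 0 1 0 1 with hcCdef
  -- Relation (i): m4 + (dr-1) * bC = m2
  have hRi : m4 + (dr - 1) * bC = m2 := by
    have e1 : ∫ S, (S (0:Fin d) 0 * S 0 0) * (∑ a, S 0 a * S 0 a) ∂μ = m2 := by
      refine integral_congr_ae ?_
      filter_upwards [hO] with S hS
      rw [rows_orthonormal hS 0 0, if_pos rfl, mul_one]
    have e2 : ∫ S, (S (0:Fin d) 0 * S 0 0) * (∑ a, S 0 a * S 0 a) ∂μ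
        = ∑ a, mom μ 0 0 0 0 0 0 a a := by
      have hpt : ∀ S : Mat d, (S (0:Fin d) 0 * S 0 0) * (∑ a, S 0 a * S 0 a)
          = ∑ a, S 0 0 * S 0 0 * S 0 a * S 0 a := by
        intro S
        rw [Finset.mul_sum]
        exact Finset.sum_congr rfl (fun a _ => by ring)
      rw [integral_congr_ae (Filter.Eventually.of_forall hpt),
        integral_finset_sum _ (fun a _ => integ4 μ hO 0 0 0 0 0 0 a a)]
      simp only [mom]
    have e3 : ∑ a, mom μ 0 0 0 0 0 0 a a = m4 + (dr - 1) * bC := by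
      refine sum_split_head hd _ _ _ rfl (fun a ha => ?_)
      rw [mom_perm μ hL hR (Equiv.refl _) (Equiv.swap a 1) 0 0 0 0 0 0 a a]
      simp [Equiv.swap_apply_left,
        Equiv.swap_apply_of_ne_of_ne (Ne.symm ha) h01]
      rfl
    rw [e2, e3] at e1
    exact e1
  -- Relation (ii): m4 + (dr-1) * aC = m2
  have hRii : m4 + (dr - 1) * aC = m2 := by
    have e1 : ∫ S, (S (0:Fin d) 0 * S 0 0) * (∑ i, S i 0 * S i 0) ∂μ = m2 := by
      refine integral_congr_ae ?_
      filter_upwards [hO] with S hS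
      rw [cols_orthonormal hS 0 0, if_pos rfl, mul_one]
    have e2 : ∫ S, (S (0:Fin d) 0 * S 0 0) * (∑ i, S i 0 * S i 0) ∂μ
        = ∑ i, mom μ 0 0 i i 0 0 0 0 := by
      have hpt : ∀ S : Mat d, (S (0:Fin d) 0 * S 0 0) * (∑ i, S i 0 * S i 0)
          = ∑ i, S 0 0 * S 0 0 * S i 0 * S i 0 := by
        intro S
        rw [Finset.mul_sum]
        exact Finset.sum_congr rfl (fun i _ => by ring)
      rw [integral_congr_ae (Filter.Eventually.of_forall hpt),
        integral_finset_sum _ (fun i _ => integ4 μ hO 0 0 i i 0 0 0 0)]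
      simp only [mom]
    have e3 : ∑ i, mom μ 0 0 i i 0 0 0 0 = m4 + (dr - 1) * aC := by
      refine sum_split_head hd _ _ _ rfl (fun i hi => ?_)
      rw [mom_perm μ hL hR (Equiv.swap i 1) (Equiv.refl _) 0 0 i i 0 0 0 0]
      simp [Equiv.swap_apply_left,
        Equiv.swap_apply_of_ne_of_ne (Ne.symm hi) h01]
      rfl
    rw [e2, e3] at e1
    exact e1
  -- Relation (iii): bC + (dr-1) * cC = 0
  have hRiii : bC + (dr - 1) * cC = 0 := by
    have e1 : ∫ S, (S (0:Fin d) 0 * S 0 1) * (∑ i, S i 0 * S i 1) ∂μ = 0 := by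
      rw [integral_congr_ae (g := fun _ => (0:ℝ))]
      · simp
      · filter_upwards [hO] with S hS
        rw [cols_orthonormal hS 0 1, if_neg h01, mul_zero]
    have e2 : ∫ S, (S (0:Fin d) 0 * S 0 1) * (∑ i, S i 0 * S i 1) ∂μ
        = ∑ i, mom μ 0 0 i i 0 1 0 1 := by
      have hpt : ∀ S : Mat d, (S (0:Fin d) 0 * S 0 1) * (∑ i, S i 0 * S i 1)
          = ∑ i, S 0 0 * S 0 1 * S i 0 * S i 1 := by
        intro S
        rw [Finset.mul_sum]
        exact Finset.sum_congr rfl (fun i _ => by ring)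
      rw [integral_congr_ae (Filter.Eventually.of_forall hpt),
        integral_finset_sum _ (fun i _ => integ4 μ hO 0 0 i i 0 1 0 1)]
      simp only [mom]
    have e3 : ∑ i, mom μ 0 0 i i 0 1 0 1 = bC + (dr - 1) * cC := by
      refine sum_split_head hd _ _ _ ?_ (fun i hi => ?_)
      · rw [hbCdef]
        exact mom_reorder μ (fun S => by ring)
      · rw [mom_perm μ hL hR (Equiv.swap i 1) (Equiv.refl _) 0 0 i i 0 1 0 1]
        simp [Equiv.swap_apply_left,
          Equiv.swap_apply_of_ne_of_ne (Ne.symm hi) h01]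
        rfl
    rw [e2, e3] at e1
    exact e1
  -- Relation (iv): aC + (dr-1) * eC = m2
  have hRiv : aC + (dr - 1) * eC = m2 := by
    have e1 : ∫ S, (S (0:Fin d) 0 * S 0 0) * (∑ a, S 1 a * S 1 a) ∂μ = m2 := by
      refine integral_congr_ae ?_
      filter_upwards [hO] with S hS
      rw [rows_orthonormal hS 1 1, if_pos rfl, mul_one]
    have e2 : ∫ S, (S (0:Fin d) 0 * S 0 0) * (∑ a, S 1 a * S 1 a) ∂μ
        = ∑ a, mom μ 0 0 1 1 0 0 a a := by
      have hpt : ∀ S : Mat d, (S (0:Fin d) 0 * S 0 0) * (∑ a, S 1 a * S 1 a)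
          = ∑ a, S 0 0 * S 0 0 * S 1 a * S 1 a := by
        intro S
        rw [Finset.mul_sum]
        exact Finset.sum_congr rfl (fun a _ => by ring)
      rw [integral_congr_ae (Filter.Eventually.of_forall hpt),
        integral_finset_sum _ (fun a _ => integ4 μ hO 0 0 1 1 0 0 a a)]
      simp only [mom]
    have e3 : ∑ a, mom μ 0 0 1 1 0 0 a a = aC + (dr - 1) * eC := by
      refine sum_split_head hd _ _ _ rfl (fun a ha => ?_)
      rw [mom_perm μ hL hR (Equiv.refl _) (Equiv.swap a 1) 0 0 1 1 0 0 a a]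
      simp [Equiv.swap_apply_left,
        Equiv.swap_apply_of_ne_of_ne (Ne.symm ha) h01]
      rfl
    rw [e2, e3] at e1
    exact e1
  -- Rotation relation: m4 = 3 * aC
  have hRrot : m4 = 3 * aC := by
    have hm4' : mom μ 1 1 1 1 0 0 0 0 = m4 := by
      rw [hm4def, mom_perm μ hL hR (Equiv.swap 0 1) (Equiv.refl _) 0 0 0 0 0 0 0 0]
      simp [Equiv.swap_apply_left]
    have hT1 : mom μ 0 0 0 1 0 0 0 0 = 0 := by
      refine mom_zero_row μ hL (r := 1) _ _ _ _ ?_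
      rw [if_neg h01, if_pos rfl]
      norm_num
    have hT2 : mom μ 0 1 1 1 0 0 0 0 = 0 := by
      refine mom_zero_row μ hL (r := 1) _ _ _ _ ?_
      rw [if_neg h01, if_pos rfl]
      norm_num
    have hrot0 : m4 = ∫ S, ((Rot (d := d) * S) 0 0) * ((Rot (d := d) * S) 0 0) *
        ((Rot (d := d) * S) 0 0) * ((Rot (d := d) * S) 0 0) ∂μ := by
      rw [hm4def, mom, ← cov_left μ hL (Rot_mem hd) _ (meas4 0 0 0 0 0 0 0 0)]
    have hpt : ∀ S : Mat d, ((Rot (d := d) * S) 0 0) * ((Rot (d := d) * S) 0 0) *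
        ((Rot (d := d) * S) 0 0) * ((Rot (d := d) * S) 0 0)
        = (1/4) * (S 0 0 * S 0 0 * S 0 0 * S 0 0) + (S 0 0 * S 0 0 * S 0 0 * S 1 0)
          + (3/2) * (S 0 0 * S 0 0 * S 1 0 * S 1 0) + (S 0 0 * S 1 0 * S 1 0 * S 1 0)
          + (1/4) * (S 1 0 * S 1 0 * S 1 0 * S 1 0) := by
      intro S
      rw [Rot_mulL_00 hd]
      linear_combination (rs^2 + 1/2) * (S 0 0 + S 1 0)^4 * rs_sq
    have I1 : Integrable (fun S : Mat d => (1/4) * (S 0 0 * S 0 0 * S 0 0 * S 0 0)) μ :=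
      (integ4 μ hO 0 0 0 0 0 0 0 0).const_mul (1/4 : ℝ)
    have I2 := integ4 μ hO 0 0 0 1 0 0 0 0
    have I3 : Integrable (fun S : Mat d => (3/2) * (S 0 0 * S 0 0 * S 1 0 * S 1 0)) μ :=
      (integ4 μ hO 0 0 1 1 0 0 0 0).const_mul (3/2 : ℝ)
    have I4 := integ4 μ hO 0 1 1 1 0 0 0 0
    have I5 : Integrable (fun S : Mat d => (1/4) * (S 1 0 * S 1 0 * S 1 0 * S 1 0)) μ :=
      (integ4 μ hO 1 1 1 1 0 0 0 0).const_mul (1/4 : ℝ)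
    have I12 : Integrable (fun S : Mat d => (1/4) * (S 0 0 * S 0 0 * S 0 0 * S 0 0)
        + S 0 0 * S 0 0 * S 0 0 * S 1 0) μ := I1.add I2
    have I123 : Integrable (fun S : Mat d => (1/4) * (S 0 0 * S 0 0 * S 0 0 * S 0 0)
        + S 0 0 * S 0 0 * S 0 0 * S 1 0 + (3/2) * (S 0 0 * S 0 0 * S 1 0 * S 1 0)) μ := I12.add I3
    have I1234 : Integrable (fun S : Mat d => (1/4) * (S 0 0 * S 0 0 * S 0 0 * S 0 0)
        + S 0 0 * S 0 0 * S 0 0 * S 1 0 + (3/2) * (S 0 0 * S 0 0 * S 1 0 * S 1 0)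
        + S 0 0 * S 1 0 * S 1 0 * S 1 0) μ := I123.add I4
    rw [integral_congr_ae (Filter.Eventually.of_forall hpt),
      integral_add I1234 I5,
      integral_add I123 I4,
      integral_add I12 I3,
      integral_add I1 I2,
      integral_const_mul, integral_const_mul, integral_const_mul] at hrot0
    have : m4 = (1/4) * m4 + mom μ 0 0 0 1 0 0 0 0 + (3/2) * aC + mom μ 0 1 1 1 0 0 0 0
        + (1/4) * mom μ 1 1 1 1 0 0 0 0 := hrot0
    rw [hT1, hT2, hm4'] at this
    linarith
  -- solve
  have haC' : aC * (dr * (dr + 2)) = 1 := by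
    linear_combination dr * hRii - dr * hRrot + hdm2
  have hbCa : bC = aC := by
    have h := mul_left_cancel₀ hd1 (show (dr - 1) * bC = (dr - 1) * aC by linarith)
    exact h
  have haC : aC = 1 / (dr * (dr + 2)) := by
    rw [eq_div_iff (mul_ne_zero hd0 hd2)]
    exact haC'
  refine ⟨?_, ?_, ?_, ?_, ?_⟩
  · rw [hRrot, haC]; ring
  · rw [hbCa, haC]
  · exact haC
  · rw [eq_div_iff (by
      intro h
      rcases mul_eq_zero.mp h with h' | h'
      · rcases mul_eq_zero.mp h' with h'' | h'' <;> [exact hd0 h''; exact hd1 h'']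
      · exact hd2 h')]
    linear_combination dr * (dr + 2) * hRiv - haC' + (dr + 2) * hdm2
  · rw [eq_div_iff (by
      intro h
      rcases mul_eq_zero.mp h with h' | h'
      · rcases mul_eq_zero.mp h' with h'' | h'' <;> [exact hd0 h''; exact hd1 h'']
      · exact hd2 h')]
    linear_combination dr * (dr + 2) * hRiii - dr * (dr + 2) * hbCa - haC'

end Canonical

def dd (x y : Fin d) : ℝ := if x = y then 1 else 0

lemma ddp {x y z w : Fin d} (h : ¬(x = y ∧ z = w)) : dd x y * dd z w = 0 := by
  unfold dd
  split_ifs with h1 h2 <;> simp_all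

lemma perm_to01 [NeZero d] (hd : 2 ≤ d) {x y : Fin d} (h : x ≠ y) :
    ∃ τ : Equiv.Perm (Fin d), τ x = 0 ∧ τ y = 1 := by
  have h01 : (0 : Fin d) ≠ 1 := fin_zero_ne_one hd
  have hz : (Equiv.swap x 0) y ≠ 0 := by
    intro hzer
    exact h ((Equiv.swap x 0).injective (hzer.trans (Equiv.swap_apply_left x 0).symm)).symm
  refine ⟨(Equiv.swap x 0).trans (Equiv.swap ((Equiv.swap x 0) y) 1), ?_, ?_⟩
  · show (Equiv.swap ((Equiv.swap x 0) y) 1) ((Equiv.swap x 0) x) = 0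
    rw [Equiv.swap_apply_left]
    exact Equiv.swap_apply_of_ne_of_ne (Ne.symm hz) h01
  · exact Equiv.swap_apply_left _ _

section Values
variable [NeZero d] (μ : Measure (Mat d)) [IsProbabilityMeasure μ]
lemma V1 (hd : 2 ≤ d)
    (hO : ∀ᵐ S ∂μ, S ∈ Matrix.orthogonalGroup (Fin d) ℝ)
    (hL : ∀ Q ∈ Matrix.orthogonalGroup (Fin d) ℝ, μ.map (fun S => Q * S) = μ)
    (hR : ∀ Q ∈ Matrix.orthogonalGroup (Fin d) ℝ, μ.map (fun S => S * Q) = μ) :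
    mom μ 0 0 0 0 0 0 0 0 = 3/((d:ℝ)*((d:ℝ)+2)) := by
  exact (mom_reorder μ (fun S => by ring)).trans ((canonical_vals μ hd hO hL hR).1)
lemma V2 (hd : 2 ≤ d)
    (hO : ∀ᵐ S ∂μ, S ∈ Matrix.orthogonalGroup (Fin d) ℝ)
    (hL : ∀ Q ∈ Matrix.orthogonalGroup (Fin d) ℝ, μ.map (fun S => Q * S) = μ)
    (hR : ∀ Q ∈ Matrix.orthogonalGroup (Fin d) ℝ, μ.map (fun S => S * Q) = μ) :
    mom μ 0 0 0 0 0 0 1 1 = 1/((d:ℝ)*((d:ℝ)+2)) := by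
  exact (mom_reorder μ (fun S => by ring)).trans ((canonical_vals μ hd hO hL hR).2.1)
lemma V3 (hd : 2 ≤ d)
    (hO : ∀ᵐ S ∂μ, S ∈ Matrix.orthogonalGroup (Fin d) ℝ)
    (hL : ∀ Q ∈ Matrix.orthogonalGroup (Fin d) ℝ, μ.map (fun S => Q * S) = μ)
    (hR : ∀ Q ∈ Matrix.orthogonalGroup (Fin d) ℝ, μ.map (fun S => S * Q) = μ) :
    mom μ 0 0 0 0 0 1 0 1 = 1/((d:ℝ)*((d:ℝ)+2)) := by
  exact (mom_reorder μ (fun S => by ring)).trans ((canonical_vals μ hd hO hL hR).2.1)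
lemma V4 (hd : 2 ≤ d)
    (hO : ∀ᵐ S ∂μ, S ∈ Matrix.orthogonalGroup (Fin d) ℝ)
    (hL : ∀ Q ∈ Matrix.orthogonalGroup (Fin d) ℝ, μ.map (fun S => Q * S) = μ)
    (hR : ∀ Q ∈ Matrix.orthogonalGroup (Fin d) ℝ, μ.map (fun S => S * Q) = μ) :
    mom μ 0 0 0 0 0 1 1 0 = 1/((d:ℝ)*((d:ℝ)+2)) := by
  exact (mom_reorder μ (fun S => by ring)).trans ((canonical_vals μ hd hO hL hR).2.1)
lemma V5 (hd : 2 ≤ d)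
    (hO : ∀ᵐ S ∂μ, S ∈ Matrix.orthogonalGroup (Fin d) ℝ)
    (hL : ∀ Q ∈ Matrix.orthogonalGroup (Fin d) ℝ, μ.map (fun S => Q * S) = μ)
    (hR : ∀ Q ∈ Matrix.orthogonalGroup (Fin d) ℝ, μ.map (fun S => S * Q) = μ) :
    mom μ 0 0 1 1 0 0 0 0 = 1/((d:ℝ)*((d:ℝ)+2)) := by
  exact (mom_reorder μ (fun S => by ring)).trans ((canonical_vals μ hd hO hL hR).2.2.1)
lemma V6 (hd : 2 ≤ d)
    (hO : ∀ᵐ S ∂μ, S ∈ Matrix.orthogonalGroup (Fin d) ℝ)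
    (hL : ∀ Q ∈ Matrix.orthogonalGroup (Fin d) ℝ, μ.map (fun S => Q * S) = μ)
    (hR : ∀ Q ∈ Matrix.orthogonalGroup (Fin d) ℝ, μ.map (fun S => S * Q) = μ) :
    mom μ 0 1 0 1 0 0 0 0 = 1/((d:ℝ)*((d:ℝ)+2)) := by
  exact (mom_reorder μ (fun S => by ring)).trans ((canonical_vals μ hd hO hL hR).2.2.1)
lemma V7 (hd : 2 ≤ d)
    (hO : ∀ᵐ S ∂μ, S ∈ Matrix.orthogonalGroup (Fin d) ℝ)
    (hL : ∀ Q ∈ Matrix.orthogonalGroup (Fin d) ℝ, μ.map (fun S => Q * S) = μ)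
    (hR : ∀ Q ∈ Matrix.orthogonalGroup (Fin d) ℝ, μ.map (fun S => S * Q) = μ) :
    mom μ 0 1 1 0 0 0 0 0 = 1/((d:ℝ)*((d:ℝ)+2)) := by
  exact (mom_reorder μ (fun S => by ring)).trans ((canonical_vals μ hd hO hL hR).2.2.1)
lemma V8 (hd : 2 ≤ d)
    (hO : ∀ᵐ S ∂μ, S ∈ Matrix.orthogonalGroup (Fin d) ℝ)
    (hL : ∀ Q ∈ Matrix.orthogonalGroup (Fin d) ℝ, μ.map (fun S => Q * S) = μ)
    (hR : ∀ Q ∈ Matrix.orthogonalGroup (Fin d) ℝ, μ.map (fun S => S * Q) = μ) :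
    mom μ 0 0 1 1 0 0 1 1 = ((d:ℝ)+1)/((d:ℝ)*((d:ℝ)-1)*((d:ℝ)+2)) := by
  exact (mom_reorder μ (fun S => by ring)).trans ((canonical_vals μ hd hO hL hR).2.2.2.1)
lemma V9 (hd : 2 ≤ d)
    (hO : ∀ᵐ S ∂μ, S ∈ Matrix.orthogonalGroup (Fin d) ℝ)
    (hL : ∀ Q ∈ Matrix.orthogonalGroup (Fin d) ℝ, μ.map (fun S => Q * S) = μ)
    (hR : ∀ Q ∈ Matrix.orthogonalGroup (Fin d) ℝ, μ.map (fun S => S * Q) = μ) :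
    mom μ 0 1 0 1 0 1 0 1 = ((d:ℝ)+1)/((d:ℝ)*((d:ℝ)-1)*((d:ℝ)+2)) := by
  exact (mom_reorder μ (fun S => by ring)).trans ((canonical_vals μ hd hO hL hR).2.2.2.1)
lemma V10 (hd : 2 ≤ d)
    (hO : ∀ᵐ S ∂μ, S ∈ Matrix.orthogonalGroup (Fin d) ℝ)
    (hL : ∀ Q ∈ Matrix.orthogonalGroup (Fin d) ℝ, μ.map (fun S => Q * S) = μ)
    (hR : ∀ Q ∈ Matrix.orthogonalGroup (Fin d) ℝ, μ.map (fun S => S * Q) = μ) :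
    mom μ 0 1 1 0 0 1 1 0 = ((d:ℝ)+1)/((d:ℝ)*((d:ℝ)-1)*((d:ℝ)+2)) := by
  exact (mom_reorder μ (fun S => by ring)).trans ((canonical_vals μ hd hO hL hR).2.2.2.1)
lemma V11 (hd : 2 ≤ d)
    (hO : ∀ᵐ S ∂μ, S ∈ Matrix.orthogonalGroup (Fin d) ℝ)
    (hL : ∀ Q ∈ Matrix.orthogonalGroup (Fin d) ℝ, μ.map (fun S => Q * S) = μ)
    (hR : ∀ Q ∈ Matrix.orthogonalGroup (Fin d) ℝ, μ.map (fun S => S * Q) = μ) :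
    mom μ 0 0 1 1 0 1 0 1 = -1/((d:ℝ)*((d:ℝ)-1)*((d:ℝ)+2)) := by
  exact (mom_reorder μ (fun S => by ring)).trans ((canonical_vals μ hd hO hL hR).2.2.2.2)
lemma V12 (hd : 2 ≤ d)
    (hO : ∀ᵐ S ∂μ, S ∈ Matrix.orthogonalGroup (Fin d) ℝ)
    (hL : ∀ Q ∈ Matrix.orthogonalGroup (Fin d) ℝ, μ.map (fun S => Q * S) = μ)
    (hR : ∀ Q ∈ Matrix.orthogonalGroup (Fin d) ℝ, μ.map (fun S => S * Q) = μ) :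
    mom μ 0 0 1 1 0 1 1 0 = -1/((d:ℝ)*((d:ℝ)-1)*((d:ℝ)+2)) := by
  exact (mom_reorder μ (fun S => by ring)).trans ((canonical_vals μ hd hO hL hR).2.2.2.2)
lemma V13 (hd : 2 ≤ d)
    (hO : ∀ᵐ S ∂μ, S ∈ Matrix.orthogonalGroup (Fin d) ℝ)
    (hL : ∀ Q ∈ Matrix.orthogonalGroup (Fin d) ℝ, μ.map (fun S => Q * S) = μ)
    (hR : ∀ Q ∈ Matrix.orthogonalGroup (Fin d) ℝ, μ.map (fun S => S * Q) = μ) :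
    mom μ 0 1 0 1 0 0 1 1 = -1/((d:ℝ)*((d:ℝ)-1)*((d:ℝ)+2)) := by
  exact (mom_reorder μ (fun S => by ring)).trans ((canonical_vals μ hd hO hL hR).2.2.2.2)
lemma V14 (hd : 2 ≤ d)
    (hO : ∀ᵐ S ∂μ, S ∈ Matrix.orthogonalGroup (Fin d) ℝ)
    (hL : ∀ Q ∈ Matrix.orthogonalGroup (Fin d) ℝ, μ.map (fun S => Q * S) = μ)
    (hR : ∀ Q ∈ Matrix.orthogonalGroup (Fin d) ℝ, μ.map (fun S => S * Q) = μ) :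
    mom μ 0 1 0 1 0 1 1 0 = -1/((d:ℝ)*((d:ℝ)-1)*((d:ℝ)+2)) := by
  exact (mom_reorder μ (fun S => by ring)).trans ((canonical_vals μ hd hO hL hR).2.2.2.2)
lemma V15 (hd : 2 ≤ d)
    (hO : ∀ᵐ S ∂μ, S ∈ Matrix.orthogonalGroup (Fin d) ℝ)
    (hL : ∀ Q ∈ Matrix.orthogonalGroup (Fin d) ℝ, μ.map (fun S => Q * S) = μ)
    (hR : ∀ Q ∈ Matrix.orthogonalGroup (Fin d) ℝ, μ.map (fun S => S * Q) = μ) :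
    mom μ 0 1 1 0 0 0 1 1 = -1/((d:ℝ)*((d:ℝ)-1)*((d:ℝ)+2)) := by
  exact (mom_reorder μ (fun S => by ring)).trans ((canonical_vals μ hd hO hL hR).2.2.2.2)
lemma V16 (hd : 2 ≤ d)
    (hO : ∀ᵐ S ∂μ, S ∈ Matrix.orthogonalGroup (Fin d) ℝ)
    (hL : ∀ Q ∈ Matrix.orthogonalGroup (Fin d) ℝ, μ.map (fun S => Q * S) = μ)
    (hR : ∀ Q ∈ Matrix.orthogonalGroup (Fin d) ℝ, μ.map (fun S => S * Q) = μ) :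
    mom μ 0 1 1 0 0 1 0 1 = -1/((d:ℝ)*((d:ℝ)-1)*((d:ℝ)+2)) := by
  exact (mom_reorder μ (fun S => by ring)).trans ((canonical_vals μ hd hO hL hR).2.2.2.2)
end Values

lemma tensor [NeZero d] (μ : Measure (Mat d)) [IsProbabilityMeasure μ] (hd : 2 ≤ d)
    (hO : ∀ᵐ S ∂μ, S ∈ Matrix.orthogonalGroup (Fin d) ℝ)
    (hL : ∀ Q ∈ Matrix.orthogonalGroup (Fin d) ℝ, μ.map (fun S => Q * S) = μ)
    (hR : ∀ Q ∈ Matrix.orthogonalGroup (Fin d) ℝ, μ.map (fun S => S * Q) = μ)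
    (E C : ℝ) (hE : E = ((d:ℝ)+1)/((d:ℝ)*((d:ℝ)-1)*((d:ℝ)+2)))
    (hC : C = -1/((d:ℝ)*((d:ℝ)-1)*((d:ℝ)+2)))
    (i j k l a b c e : Fin d) :
    mom μ i j k l a b c e =
      E * (dd i j * dd k l * dd a b * dd c e + dd i k * dd j l * dd a c * dd b e
            + dd i l * dd j k * dd a e * dd b c)
      + C * (dd i j * dd k l * (dd a c * dd b e + dd a e * dd b c)
            + dd i k * dd j l * (dd a b * dd c e + dd a e * dd b c)
            + dd i l * dd j k * (dd a b * dd c e + dd a c * dd b e)) := by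
  have hdr2 : (2:ℝ) ≤ (d:ℝ) := by exact_mod_cast hd
  have hd0 : (d:ℝ) ≠ 0 := by linarith
  have hd1 : (d:ℝ) - 1 ≠ 0 := by linarith
  have hd2 : (d:ℝ) + 2 ≠ 0 := by linarith
  rcases row_class a b c e with hcol | hcol | hcol | hcol | hcol
  · -- col case 0
      obtain ⟨hc1, hc2, hc3⟩ := hcol
      rw [← hc3, ← hc2, ← hc1]
      rcases row_class i j k l with hrow | hrow | hrow | hrow | hrow
      · obtain ⟨hr1, hr2, hr3⟩ := hrow
        rw [← hr3, ← hr2, ← hr1]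
        have hs1 := Equiv.swap_apply_left i (0 : Fin d)
        rw [mom_perm μ hL hR (Equiv.swap i 0) (Equiv.swap a 0), hs1, Equiv.swap_apply_left a (0 : Fin d)]
        rw [V1 μ hd hO hL hR, hE, hC]
        simp [dd]
        try field_simp
        try ring
      · obtain ⟨hr1, hr2, hrne⟩ := hrow
        rw [← hr1, ← hr2]
        obtain ⟨σ, hs1, hs2⟩ := perm_to01 hd hrne
        rw [mom_perm μ hL hR σ (Equiv.swap a 0), hs1, hs2, Equiv.swap_apply_left a (0 : Fin d)]
        rw [V5 μ hd hO hL hR, hE, hC]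
        simp [dd, hrne, Ne.symm hrne]
        try field_simp
        try ring
      · obtain ⟨hr1, hr2, hrne⟩ := hrow
        rw [← hr1, ← hr2]
        obtain ⟨σ, hs1, hs2⟩ := perm_to01 hd hrne
        rw [mom_perm μ hL hR σ (Equiv.swap a 0), hs1, hs2, Equiv.swap_apply_left a (0 : Fin d)]
        rw [V6 μ hd hO hL hR, hE, hC]
        simp [dd, hrne, Ne.symm hrne]
        try field_simp
        try ring
      · obtain ⟨hr1, hr2, hrne⟩ := hrow
        rw [← hr1, ← hr2]
        obtain ⟨σ, hs1, hs2⟩ := perm_to01 hd hrne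
        rw [mom_perm μ hL hR σ (Equiv.swap a 0), hs1, hs2, Equiv.swap_apply_left a (0 : Fin d)]
        rw [V7 μ hd hO hL hR, hE, hC]
        simp [dd, hrne, Ne.symm hrne]
        try field_simp
        try ring
      · obtain ⟨⟨r, hsign⟩, hP1, hP2, hP3⟩ := hrow
        rw [mom_zero_row μ hL _ _ _ _ hsign, ddp hP1, ddp hP2, ddp hP3]
        ring
  · -- col case 1
      obtain ⟨hc1, hc2, hcne⟩ := hcol
      rw [← hc1, ← hc2]
      rcases row_class i j k l with hrow | hrow | hrow | hrow | hrow
      · obtain ⟨hr1, hr2, hr3⟩ := hrow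
        rw [← hr3, ← hr2, ← hr1]
        obtain ⟨τ, ht1, ht2⟩ := perm_to01 hd hcne
        have hs1 := Equiv.swap_apply_left i (0 : Fin d)
        rw [mom_perm μ hL hR (Equiv.swap i 0) τ, hs1]
        rw [ht1, ht2]
        rw [V2 μ hd hO hL hR, hE, hC]
        simp [dd, hcne, Ne.symm hcne]
        try field_simp
        try ring
      · obtain ⟨hr1, hr2, hrne⟩ := hrow
        rw [← hr1, ← hr2]
        obtain ⟨τ, ht1, ht2⟩ := perm_to01 hd hcne
        obtain ⟨σ, hs1, hs2⟩ := perm_to01 hd hrne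
        rw [mom_perm μ hL hR σ τ, hs1, hs2]
        rw [ht1, ht2]
        rw [V8 μ hd hO hL hR, hE, hC]
        simp [dd, hrne, Ne.symm hrne, hcne, Ne.symm hcne]
        try field_simp
        try ring
      · obtain ⟨hr1, hr2, hrne⟩ := hrow
        rw [← hr1, ← hr2]
        obtain ⟨τ, ht1, ht2⟩ := perm_to01 hd hcne
        obtain ⟨σ, hs1, hs2⟩ := perm_to01 hd hrne
        rw [mom_perm μ hL hR σ τ, hs1, hs2]
        rw [ht1, ht2]
        rw [V13 μ hd hO hL hR, hE, hC]
        simp [dd, hrne, Ne.symm hrne, hcne, Ne.symm hcne]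
        try field_simp
        try ring
      · obtain ⟨hr1, hr2, hrne⟩ := hrow
        rw [← hr1, ← hr2]
        obtain ⟨τ, ht1, ht2⟩ := perm_to01 hd hcne
        obtain ⟨σ, hs1, hs2⟩ := perm_to01 hd hrne
        rw [mom_perm μ hL hR σ τ, hs1, hs2]
        rw [ht1, ht2]
        rw [V15 μ hd hO hL hR, hE, hC]
        simp [dd, hrne, Ne.symm hrne, hcne, Ne.symm hcne]
        try field_simp
        try ring
      · obtain ⟨⟨r, hsign⟩, hP1, hP2, hP3⟩ := hrow
        rw [mom_zero_row μ hL _ _ _ _ hsign, ddp hP1, ddp hP2, ddp hP3]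
        ring
  · -- col case 2
      obtain ⟨hc1, hc2, hcne⟩ := hcol
      rw [← hc1, ← hc2]
      rcases row_class i j k l with hrow | hrow | hrow | hrow | hrow
      · obtain ⟨hr1, hr2, hr3⟩ := hrow
        rw [← hr3, ← hr2, ← hr1]
        obtain ⟨τ, ht1, ht2⟩ := perm_to01 hd hcne
        have hs1 := Equiv.swap_apply_left i (0 : Fin d)
        rw [mom_perm μ hL hR (Equiv.swap i 0) τ, hs1]
        rw [ht1, ht2]
        rw [V3 μ hd hO hL hR, hE, hC]
        simp [dd, hcne, Ne.symm hcne]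
        try field_simp
        try ring
      · obtain ⟨hr1, hr2, hrne⟩ := hrow
        rw [← hr1, ← hr2]
        obtain ⟨τ, ht1, ht2⟩ := perm_to01 hd hcne
        obtain ⟨σ, hs1, hs2⟩ := perm_to01 hd hrne
        rw [mom_perm μ hL hR σ τ, hs1, hs2]
        rw [ht1, ht2]
        rw [V11 μ hd hO hL hR, hE, hC]
        simp [dd, hrne, Ne.symm hrne, hcne, Ne.symm hcne]
        try field_simp
        try ring
      · obtain ⟨hr1, hr2, hrne⟩ := hrow
        rw [← hr1, ← hr2]
        obtain ⟨τ, ht1, ht2⟩ := perm_to01 hd hcne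
        obtain ⟨σ, hs1, hs2⟩ := perm_to01 hd hrne
        rw [mom_perm μ hL hR σ τ, hs1, hs2]
        rw [ht1, ht2]
        rw [V9 μ hd hO hL hR, hE, hC]
        simp [dd, hrne, Ne.symm hrne, hcne, Ne.symm hcne]
        try field_simp
        try ring
      · obtain ⟨hr1, hr2, hrne⟩ := hrow
        rw [← hr1, ← hr2]
        obtain ⟨τ, ht1, ht2⟩ := perm_to01 hd hcne
        obtain ⟨σ, hs1, hs2⟩ := perm_to01 hd hrne
        rw [mom_perm μ hL hR σ τ, hs1, hs2]
        rw [ht1, ht2]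
        rw [V16 μ hd hO hL hR, hE, hC]
        simp [dd, hrne, Ne.symm hrne, hcne, Ne.symm hcne]
        try field_simp
        try ring
      · obtain ⟨⟨r, hsign⟩, hP1, hP2, hP3⟩ := hrow
        rw [mom_zero_row μ hL _ _ _ _ hsign, ddp hP1, ddp hP2, ddp hP3]
        ring
  · -- col case 3
      obtain ⟨hc1, hc2, hcne⟩ := hcol
      rw [← hc1, ← hc2]
      rcases row_class i j k l with hrow | hrow | hrow | hrow | hrow
      · obtain ⟨hr1, hr2, hr3⟩ := hrow
        rw [← hr3, ← hr2, ← hr1]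
        obtain ⟨τ, ht1, ht2⟩ := perm_to01 hd hcne
        have hs1 := Equiv.swap_apply_left i (0 : Fin d)
        rw [mom_perm μ hL hR (Equiv.swap i 0) τ, hs1]
        rw [ht1, ht2]
        rw [V4 μ hd hO hL hR, hE, hC]
        simp [dd, hcne, Ne.symm hcne]
        try field_simp
        try ring
      · obtain ⟨hr1, hr2, hrne⟩ := hrow
        rw [← hr1, ← hr2]
        obtain ⟨τ, ht1, ht2⟩ := perm_to01 hd hcne
        obtain ⟨σ, hs1, hs2⟩ := perm_to01 hd hrne
        rw [mom_perm μ hL hR σ τ, hs1, hs2]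
        rw [ht1, ht2]
        rw [V12 μ hd hO hL hR, hE, hC]
        simp [dd, hrne, Ne.symm hrne, hcne, Ne.symm hcne]
        try field_simp
        try ring
      · obtain ⟨hr1, hr2, hrne⟩ := hrow
        rw [← hr1, ← hr2]
        obtain ⟨τ, ht1, ht2⟩ := perm_to01 hd hcne
        obtain ⟨σ, hs1, hs2⟩ := perm_to01 hd hrne
        rw [mom_perm μ hL hR σ τ, hs1, hs2]
        rw [ht1, ht2]
        rw [V14 μ hd hO hL hR, hE, hC]
        simp [dd, hrne, Ne.symm hrne, hcne, Ne.symm hcne]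
        try field_simp
        try ring
      · obtain ⟨hr1, hr2, hrne⟩ := hrow
        rw [← hr1, ← hr2]
        obtain ⟨τ, ht1, ht2⟩ := perm_to01 hd hcne
        obtain ⟨σ, hs1, hs2⟩ := perm_to01 hd hrne
        rw [mom_perm μ hL hR σ τ, hs1, hs2]
        rw [ht1, ht2]
        rw [V10 μ hd hO hL hR, hE, hC]
        simp [dd, hrne, Ne.symm hrne, hcne, Ne.symm hcne]
        try field_simp
        try ring
      · obtain ⟨⟨r, hsign⟩, hP1, hP2, hP3⟩ := hrow
        rw [mom_zero_row μ hL _ _ _ _ hsign, ddp hP1, ddp hP2, ddp hP3]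
        ring
  · obtain ⟨⟨r, hsign⟩, hQ1, hQ2, hQ3⟩ := hcol
    rw [mom_zero_col μ hR _ _ _ _ hsign]
    have w1 := ddp hQ1
    have w2 := ddp hQ2
    have w3 := ddp hQ3
    linear_combination (-(E * (dd i j * dd k l)) - C * (dd i k * dd j l) - C * (dd i l * dd j k)) * w1
      + (-(C * (dd i j * dd k l)) - E * (dd i k * dd j l) - C * (dd i l * dd j k)) * w2
      + (-(C * (dd i j * dd k l)) - C * (dd i k * dd j l) - E * (dd i l * dd j k)) * w3

lemma contract (A B : Mat d) (hA : A.IsSymm) (hB : B.IsSymm) (E C : ℝ) (i j : Fin d) :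
    (∑ k, ∑ l, ∑ a, ∑ b, ∑ c, ∑ e, (A a b * B k l * A c e *
      (E * (dd i k * dd l j * dd a b * dd c e + dd i l * dd k j * dd a c * dd b e
            + dd i j * dd k l * dd a e * dd b c)
      + C * (dd i k * dd l j * (dd a c * dd b e + dd a e * dd b c)
            + dd i l * dd k j * (dd a b * dd c e + dd a e * dd b c)
            + dd i j * dd k l * (dd a b * dd c e + dd a c * dd b e)))))
    = dd i j * B.trace * (E * (A*Aᵀ).trace + C * (A.trace^2 + (A*Aᵀ).trace))
      + B i j * (E * (A.trace^2 + (A*Aᵀ).trace) + C * (A.trace^2 + 3*(A*Aᵀ).trace)) := by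
  have hAs : ∀ a b, A b a = A a b := fun a b => by
    conv_lhs => rw [← hA]
    rfl
  have hBs : ∀ a b, B b a = B a b := fun a b => by
    conv_lhs => rw [← hB]
    rfl
  have htr : A.trace = ∑ a, A a a := rfl
  have htr2 : (A*Aᵀ).trace = ∑ a, ∑ b, A a b * A a b := by
    rw [Matrix.trace]
    simp [Matrix.diag, Matrix.mul_apply]
  have htrB : B.trace = ∑ k, B k k := rfl
  have hpull : ∀ (F : Fin d → Fin d → ℝ) (c : ℝ),
      (∑ x, ∑ y, c * F x y) = c * (∑ x, ∑ y, F x y) := by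
    intro F c
    rw [Finset.mul_sum]
    exact Finset.sum_congr rfl fun x _ => by rw [Finset.mul_sum]
  have hPP : (∑ x : Fin d, ∑ y : Fin d, A x x * A y y) = (∑ a, A a a) * (∑ a, A a a) :=
    (Finset.sum_mul_sum _ _ _ _).symm
  simp only [dd, mul_ite, ite_mul, one_mul, mul_one, mul_zero, zero_mul, mul_add, add_mul,
    Finset.sum_add_distrib, Finset.sum_ite_eq, Finset.sum_ite_eq', Finset.mem_univ, if_true,
    Finset.sum_ite_irrel, Finset.sum_const_zero, add_zero, zero_add]
  rw [htr, htr2, htrB]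
  have S1 : (∑ x : Fin d, ∑ x_1 : Fin d, A x x * B i j * A x_1 x_1 * E)
      = E * B i j * ((∑ a, A a a) * (∑ a, A a a)) := by
    rw [← hPP, ← hpull (fun x y => A x x * A y y) (E * B i j)]
    exact Finset.sum_congr rfl fun x _ => Finset.sum_congr rfl fun y _ => by ring
  have S2 : (∑ x : Fin d, ∑ x_1 : Fin d, A x x_1 * B j i * A x x_1 * E)
      = E * B i j * (∑ a, ∑ b, A a b * A a b) := by
    rw [← hpull (fun x y => A x y * A x y) (E * B i j)]
    exact Finset.sum_congr rfl fun x _ => Finset.sum_congr rfl fun y _ => by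
      rw [hBs i j]; ring
  have S3 : (∑ x : Fin d, ∑ x_1 : Fin d, ∑ x_2 : Fin d, A x_1 x_2 * B x x * A x_2 x_1 * E)
      = E * (∑ k, B k k) * (∑ a, ∑ b, A a b * A a b) := by
    have inner : ∀ x : Fin d, (∑ x_1 : Fin d, ∑ x_2 : Fin d, A x_1 x_2 * B x x * A x_2 x_1 * E)
        = B x x * (E * (∑ a, ∑ b, A a b * A a b)) := by
      intro x
      rw [show B x x * (E * (∑ a, ∑ b, A a b * A a b))
          = (B x x * E) * (∑ a, ∑ b, A a b * A a b) from by ring,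
        ← hpull (fun a b => A a b * A a b) (B x x * E)]
      exact Finset.sum_congr rfl fun a _ => Finset.sum_congr rfl fun b _ => by
        rw [hAs a b]; ring
    rw [Finset.sum_congr rfl fun x _ => inner x, ← Finset.sum_mul]
    ring
  have S4 : (∑ x : Fin d, ∑ x_1 : Fin d, A x x_1 * B i j * A x x_1 * C)
      = C * B i j * (∑ a, ∑ b, A a b * A a b) := by
    rw [← hpull (fun x y => A x y * A x y) (C * B i j)]
    exact Finset.sum_congr rfl fun x _ => Finset.sum_congr rfl fun y _ => by ring
  have S5 : (∑ x : Fin d, ∑ x_1 : Fin d, A x x_1 * B i j * A x_1 x * C)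
      = C * B i j * (∑ a, ∑ b, A a b * A a b) := by
    rw [← hpull (fun x y => A x y * A x y) (C * B i j)]
    exact Finset.sum_congr rfl fun x _ => Finset.sum_congr rfl fun y _ => by
      rw [hAs x y]; ring
  have S6 : (∑ x : Fin d, ∑ x_1 : Fin d, A x x * B j i * A x_1 x_1 * C)
      = C * B i j * ((∑ a, A a a) * (∑ a, A a a)) := by
    rw [← hPP, ← hpull (fun x y => A x x * A y y) (C * B i j)]
    exact Finset.sum_congr rfl fun x _ => Finset.sum_congr rfl fun y _ => by
      rw [hBs i j]; ring
  have S7 : (∑ x : Fin d, ∑ x_1 : Fin d, A x x_1 * B j i * A x_1 x * C)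
      = C * B i j * (∑ a, ∑ b, A a b * A a b) := by
    rw [← hpull (fun x y => A x y * A x y) (C * B i j)]
    exact Finset.sum_congr rfl fun x _ => Finset.sum_congr rfl fun y _ => by
      rw [hAs x y, hBs i j]; ring
  have S8 : (∑ x : Fin d, ∑ x_1 : Fin d, ∑ x_2 : Fin d, A x_1 x_1 * B x x * A x_2 x_2 * C)
      = C * (∑ k, B k k) * ((∑ a, A a a) * (∑ a, A a a)) := by
    have inner : ∀ x : Fin d, (∑ x_1 : Fin d, ∑ x_2 : Fin d, A x_1 x_1 * B x x * A x_2 x_2 * C)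
        = B x x * (C * ((∑ a, A a a) * (∑ a, A a a))) := by
      intro x
      rw [← hPP, show B x x * (C * (∑ x : Fin d, ∑ y : Fin d, A x x * A y y))
          = (B x x * C) * (∑ x : Fin d, ∑ y : Fin d, A x x * A y y) from by ring,
        ← hpull (fun a b => A a a * A b b) (B x x * C)]
      exact Finset.sum_congr rfl fun a _ => Finset.sum_congr rfl fun b _ => by ring
    rw [Finset.sum_congr rfl fun x _ => inner x, ← Finset.sum_mul]
    ring
  have S9 : (∑ x : Fin d, ∑ x_1 : Fin d, ∑ x_2 : Fin d, A x_1 x_2 * B x x * A x_1 x_2 * C)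
      = C * (∑ k, B k k) * (∑ a, ∑ b, A a b * A a b) := by
    have inner : ∀ x : Fin d, (∑ x_1 : Fin d, ∑ x_2 : Fin d, A x_1 x_2 * B x x * A x_1 x_2 * C)
        = B x x * (C * (∑ a, ∑ b, A a b * A a b)) := by
      intro x
      rw [show B x x * (C * (∑ a, ∑ b, A a b * A a b))
          = (B x x * C) * (∑ a, ∑ b, A a b * A a b) from by ring,
        ← hpull (fun a b => A a b * A a b) (B x x * C)]
      exact Finset.sum_congr rfl fun a _ => Finset.sum_congr rfl fun b _ => by ring
    rw [Finset.sum_congr rfl fun x _ => inner x, ← Finset.sum_mul]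
    ring
  rw [S1, S2, S3, S4, S5, S6, S7, S8, S9]
  by_cases hij : i = j <;> simp [hij] <;> ring

end HaarFourth

open HaarFourth

/-- Lemma (fourth moment of a Haar random orthogonal matrix):
`E[S A Sᵀ B S A Sᵀ] = p_A (‖A‖_F²/d) tr(B) I + q_A (‖A‖_F²/d) B`, stated entrywise. -/
theorem haar_orthogonal_fourth_moment {d : ℕ} (hd : 2 ≤ d)
    (μ : Measure (Matrix (Fin d) (Fin d) ℝ)) (hμ : IsHaarOrthogonal μ)
    (A B : Matrix (Fin d) (Fin d) ℝ) (hA : A.IsSymm) (hB : B.IsSymm) (hA0 : A ≠ 0)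
    (fA rA pA qA : ℝ)
    (hfA : fA = (A * Aᵀ).trace)       -- ‖A‖_F²
    (hrA : rA = A.trace ^ 2 / fA)      -- effective rank of A
    (hpA : pA = ((d : ℝ) - rA) / (((d : ℝ) - 1) * ((d : ℝ) + 2)))
    (hqA : qA = (rA + 1 + (rA - 1) / ((d : ℝ) - 1)) / ((d : ℝ) + 2))
    (i j : Fin d) :
    ∫ S, (S * A * Sᵀ * B * S * A * Sᵀ) i j ∂μ =
      ((pA * (fA / d) * B.trace) • (1 : Matrix (Fin d) (Fin d) ℝ)
        + (qA * (fA / d)) • B) i j := by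
  classical
  haveI : NeZero d := ⟨by omega⟩
  obtain ⟨hP, hO, hL, hR⟩ := hμ
  haveI := hP
  have hdr2 : (2:ℝ) ≤ (d:ℝ) := by exact_mod_cast hd
  have hd0 : (d:ℝ) ≠ 0 := by linarith
  have hd1 : (d:ℝ) - 1 ≠ 0 := by linarith
  have hd2 : (d:ℝ) + 2 ≠ 0 := by linarith
  have htr2 : (A*Aᵀ).trace = ∑ a, ∑ b, A a b * A a b := by
    rw [Matrix.trace]
    simp [Matrix.diag, Matrix.mul_apply]
  have hfApos : 0 < fA := by
    have hex : ∃ a b, A a b ≠ 0 := by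
      by_contra hcon
      push_neg at hcon
      exact hA0 (by ext a b; simpa using hcon a b)
    obtain ⟨a0, b0, hab⟩ := hex
    rw [hfA, htr2]
    refine Finset.sum_pos' (fun a _ => Finset.sum_nonneg fun b _ => mul_self_nonneg _)
      ⟨a0, Finset.mem_univ _, ?_⟩
    exact Finset.sum_pos' (fun b _ => mul_self_nonneg _)
      ⟨b0, Finset.mem_univ _, mul_self_pos.mpr hab⟩
  have hfA0 : fA ≠ 0 := ne_of_gt hfApos
  -- expansion of the matrix entry
  have key : ∀ T : Matrix (Fin d) (Fin d) ℝ, (T*B*T) i j = ∑ k, ∑ l, T i k * B k l * T l j := by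
    intro T
    rw [Matrix.mul_assoc, Matrix.mul_apply]
    refine Finset.sum_congr rfl fun k _ => ?_
    rw [Matrix.mul_apply, Finset.mul_sum]
    exact Finset.sum_congr rfl fun l _ => by ring
  have hTT : ∀ (S : Matrix (Fin d) (Fin d) ℝ) (p q : Fin d),
      (S*A*Sᵀ) p q = ∑ a, ∑ b, S p a * A a b * S q b := by
    intro S p q
    rw [Matrix.mul_assoc, Matrix.mul_apply]
    refine Finset.sum_congr rfl fun a _ => ?_
    rw [Matrix.mul_apply, Finset.mul_sum]
    exact Finset.sum_congr rfl fun b _ => by rw [Matrix.transpose_apply]; ring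
  have sum_expand4 : ∀ (P Q : Fin d → Fin d → ℝ) (z : ℝ),
      (∑ a, ∑ b, P a b) * z * (∑ c, ∑ e, Q c e) = ∑ a, ∑ b, ∑ c, ∑ e, P a b * z * Q c e := by
    intro P Q z
    rw [Finset.sum_mul, Finset.sum_mul]
    refine Finset.sum_congr rfl fun a _ => ?_
    rw [Finset.sum_mul, Finset.sum_mul]
    refine Finset.sum_congr rfl fun b _ => ?_
    rw [Finset.mul_sum]
    refine Finset.sum_congr rfl fun c _ => ?_
    rw [Finset.mul_sum]
  have hexp : ∀ S : Matrix (Fin d) (Fin d) ℝ, (S*A*Sᵀ*B*S*A*Sᵀ) i j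
      = ∑ k, ∑ l, ∑ a, ∑ b, ∑ c, ∑ e,
          (A a b * B k l * A c e * (S i a * S k b * S l c * S j e)) := by
    intro S
    have hassoc : S*A*Sᵀ*B*S*A*Sᵀ = (S*A*Sᵀ)*B*(S*A*Sᵀ) := by
      rw [Matrix.mul_assoc (S*A*Sᵀ*B) S A, Matrix.mul_assoc (S*A*Sᵀ*B) (S*A) Sᵀ]
    rw [hassoc, key (S*A*Sᵀ)]
    refine Finset.sum_congr rfl fun k _ => Finset.sum_congr rfl fun l _ => ?_
    rw [hTT S i k, hTT S l j]
    refine (sum_expand4 _ _ _).trans ?_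
    exact Finset.sum_congr rfl fun a _ => Finset.sum_congr rfl fun b _ =>
      Finset.sum_congr rfl fun c _ => Finset.sum_congr rfl fun e1 _ => by ring
  -- interchange integral and sums
  have hI : ∀ k l a b c e1 : Fin d, Integrable
      (fun S : Matrix (Fin d) (Fin d) ℝ =>
        A a b * B k l * A c e1 * (S i a * S k b * S l c * S j e1)) μ :=
    fun k l a b c e1 => (integ4 μ hO i k l j a b c e1).const_mul _
  have step1 : ∫ S, (S*A*Sᵀ*B*S*A*Sᵀ) i j ∂μ
      = ∑ k, ∑ l, ∑ a, ∑ b, ∑ c, ∑ e,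
          ∫ S, (A a b * B k l * A c e * (S i a * S k b * S l c * S j e)) ∂μ := by
    rw [integral_congr_ae (Filter.Eventually.of_forall hexp)]
    rw [integral_finset_sum _ (fun k _ => integrable_finset_sum _ fun l _ =>
      integrable_finset_sum _ fun a _ => integrable_finset_sum _ fun b _ =>
      integrable_finset_sum _ fun c _ => integrable_finset_sum _ fun e1 _ => hI k l a b c e1)]
    refine Finset.sum_congr rfl fun k _ => ?_
    rw [integral_finset_sum _ (fun l _ => integrable_finset_sum _ fun a _ =>
      integrable_finset_sum _ fun b _ => integrable_finset_sum _ fun c _ =>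
      integrable_finset_sum _ fun e1 _ => hI k l a b c e1)]
    refine Finset.sum_congr rfl fun l _ => ?_
    rw [integral_finset_sum _ (fun a _ => integrable_finset_sum _ fun b _ =>
      integrable_finset_sum _ fun c _ => integrable_finset_sum _ fun e1 _ => hI k l a b c e1)]
    refine Finset.sum_congr rfl fun a _ => ?_
    rw [integral_finset_sum _ (fun b _ => integrable_finset_sum _ fun c _ =>
      integrable_finset_sum _ fun e1 _ => hI k l a b c e1)]
    refine Finset.sum_congr rfl fun b _ => ?_
    rw [integral_finset_sum _ (fun c _ => integrable_finset_sum _ fun e1 _ => hI k l a b c e1)]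
    refine Finset.sum_congr rfl fun c _ => ?_
    rw [integral_finset_sum _ (fun e1 _ => hI k l a b c e1)]
  have step2 : ∫ S, (S*A*Sᵀ*B*S*A*Sᵀ) i j ∂μ
      = ∑ k, ∑ l, ∑ a, ∑ b, ∑ c, ∑ e,
          (A a b * B k l * A c e * mom μ i k l j a b c e) := by
    rw [step1]
    exact Finset.sum_congr rfl fun k _ => Finset.sum_congr rfl fun l _ =>
      Finset.sum_congr rfl fun a _ => Finset.sum_congr rfl fun b _ =>
      Finset.sum_congr rfl fun c _ => Finset.sum_congr rfl fun e1 _ => by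
        rw [integral_const_mul]; rfl
  have htens := tensor μ hd hO hL hR
    (((d:ℝ)+1)/((d:ℝ)*((d:ℝ)-1)*((d:ℝ)+2))) (-1/((d:ℝ)*((d:ℝ)-1)*((d:ℝ)+2))) rfl rfl
  rw [step2]
  simp only [htens]
  rw [contract A B hA hB _ _ i j]
  rw [Matrix.add_apply, Matrix.smul_apply, Matrix.smul_apply, Matrix.one_apply,
    smul_eq_mul, smul_eq_mul, ← hfA, hpA, hqA, hrA]
  simp only [HaarFourth.dd]
  by_cases hij : i = j <;> simp [hij] <;> field_simp <;> ring
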